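/- Let G be a finite simple graph with n vertices and m edges. Then the largest eigenvalue of its adjacency matrix satisfies λ_PF(G) ≤ (1/2)(√(8m + 1) − 1). -/

import Mathlib

open Finset Matrix in
private lemma eig_bound {V : Type*} [Fintype V] [DecidableEq V] (G : SimpleGraph V) [DecidableRel G.Adj]
    {μ : ℝ} (hμ : μ ∈ spectrum ℝ (G.adjMatrix ℝ)) :
    μ ^ 2 + μ ≤ 2 * (Nat.card G.edgeSet : ℝ) := by
  classical
  set A := G.adjMatrix ℝ with hAdef
  -- get an eigenvector
  have hμ' : Module.End.HasEigenvalue (Matrix.toLinAlgEquiv' A) μ :=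
    Module.End.HasEigenvalue.of_mem_spectrum (by
      rwa [AlgEquiv.spectrum_eq Matrix.toLinAlgEquiv'])
  obtain ⟨v, hv⟩ := hμ'.exists_hasEigenvector
  have hA : A *ᵥ v = μ • v := by
    have := hv.apply_eq_smul
    rwa [Matrix.toLinAlgEquiv'_apply] at this
  have hvne : v ≠ 0 := hv.right
  obtain ⟨i0, hi0⟩ : ∃ i, v i ≠ 0 := by
    by_contra h
    push_neg at h
    exact hvne (funext h)
  -- pick coordinate with maximal absolute value
  have hVne : (Finset.univ : Finset V).Nonempty := ⟨i0, Finset.mem_univ _⟩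
  obtain ⟨k, -, hk⟩ := Finset.exists_max_image Finset.univ (fun i => |v i|) hVne
  have hmax : ∀ i, |v i| ≤ |v k| := fun i => hk i (Finset.mem_univ i)
  have hc : 0 < |v k| := lt_of_lt_of_le (abs_pos.mpr hi0) (hmax i0)
  -- eigen equation coordinatewise
  have e1 : ∀ u : V, ∑ w ∈ G.neighborFinset u, v w = μ * v u := by
    intro u
    have := congrFun hA u
    rw [hAdef, SimpleGraph.adjMatrix_mulVec_apply] at this
    simpa using this
  -- natural number degree bound
  set m : ℕ := Nat.card G.edgeSet with hm
  have hmcard : m = G.edgeFinset.card := by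
    simp [hm, Nat.card_coe_set_eq, Set.ncard_eq_toFinset_card', SimpleGraph.edgeFinset]
  have hdeg : ∑ u ∈ G.neighborFinset k, (G.degree u + 1) ≤ 2 * m := by
    have h1 : ∑ u ∈ G.neighborFinset k, (G.degree u + 1)
        = ∑ u ∈ insert k (G.neighborFinset k), G.degree u := by
      rw [Finset.sum_insert (G.notMem_neighborFinset_self k)]
      rw [Finset.sum_add_distrib, Finset.sum_const, smul_eq_mul, mul_one]
      rw [← G.card_neighborFinset_eq_degree]
      ring
    rw [h1, hmcard, ← G.sum_degrees_eq_twice_card_edges]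
    exact Finset.sum_le_sum_of_subset (Finset.subset_univ _)
  -- key estimate
  have key : |μ ^ 2 + μ| * |v k| ≤ (2 * m : ℝ) * |v k| := by
    have lhs : (μ ^ 2 + μ) * v k = ∑ u ∈ G.neighborFinset k, (μ * v u + v u) := by
      rw [Finset.sum_add_distrib, ← Finset.mul_sum, e1 k]; ring
    have step : ∀ u ∈ G.neighborFinset k,
        |μ * v u + v u| ≤ ((G.degree u + 1 : ℕ) : ℝ) * |v k| := by
      intro u _
      rw [← e1 u]
      calc |∑ w ∈ G.neighborFinset u, v w + v u|
          ≤ (∑ w ∈ G.neighborFinset u, |v w|) + |v u| :=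
            (abs_add_le _ _).trans (by gcongr; exact Finset.abs_sum_le_sum_abs _ _)
        _ ≤ (∑ _w ∈ G.neighborFinset u, |v k|) + |v k| :=
            add_le_add (Finset.sum_le_sum fun w _ => hmax w) (hmax u)
        _ = ((G.degree u + 1 : ℕ) : ℝ) * |v k| := by
            rw [Finset.sum_const, ← G.card_neighborFinset_eq_degree]
            push_cast
            ring
    calc |μ ^ 2 + μ| * |v k| = |(μ ^ 2 + μ) * v k| := (abs_mul _ _).symm
      _ = |∑ u ∈ G.neighborFinset k, (μ * v u + v u)| := by rw [lhs]
      _ ≤ ∑ u ∈ G.neighborFinset k, |μ * v u + v u| := Finset.abs_sum_le_sum_abs _ _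
      _ ≤ ∑ u ∈ G.neighborFinset k, ((G.degree u + 1 : ℕ) : ℝ) * |v k| :=
          Finset.sum_le_sum step
      _ = ((∑ u ∈ G.neighborFinset k, (G.degree u + 1) : ℕ) : ℝ) * |v k| := by
          rw [← Finset.sum_mul]
          push_cast
          ring
      _ ≤ (2 * m : ℝ) * |v k| := by
          have : ((∑ u ∈ G.neighborFinset k, (G.degree u + 1) : ℕ) : ℝ) ≤ (2 * m : ℝ) := by
            exact_mod_cast Nat.cast_le.mpr hdeg
          exact mul_le_mul_of_nonneg_right this (abs_nonneg _)
  have habs : |μ ^ 2 + μ| ≤ 2 * (m : ℝ) := by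
    have := (mul_le_mul_iff_of_pos_right hc).mp key
    linarith
  calc μ ^ 2 + μ ≤ |μ ^ 2 + μ| := le_abs_self _
    _ ≤ 2 * (m : ℝ) := habs

open Classical in
/-- `lamPF G` is the largest eigenvalue (Perron–Frobenius eigenvalue) of the real adjacency
matrix of the finite simple graph `G`. -/
noncomputable def lamPF {V : Type*} [Fintype V] (G : SimpleGraph V) : ℝ :=
  sSup (spectrum ℝ (G.adjMatrix ℝ))

/-- For a finite simple graph `G` with `m` edges,
`λ_PF(G) ≤ (√(8 m + 1) - 1) / 2`. -/
theorem lamPF_le_of_edges {V : Type*} [Fintype V] (G : SimpleGraph V) :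
    lamPF G ≤ (Real.sqrt (8 * (Nat.card G.edgeSet : ℝ) + 1) - 1) / 2 := by
  classical
  have hm0 : (0 : ℝ) ≤ (Nat.card G.edgeSet : ℝ) := Nat.cast_nonneg _
  have hs1 : (1 : ℝ) ≤ Real.sqrt (8 * (Nat.card G.edgeSet : ℝ) + 1) := by
    have h := Real.sqrt_le_sqrt (show (1:ℝ) ≤ 8 * (Nat.card G.edgeSet : ℝ) + 1 by linarith)
    rwa [Real.sqrt_one] at h
  have hsq : Real.sqrt (8 * (Nat.card G.edgeSet : ℝ) + 1) ^ 2
      = 8 * (Nat.card G.edgeSet : ℝ) + 1 := Real.sq_sqrt (by linarith)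
  unfold lamPF
  apply Real.sSup_le
  · intro μ hμ
    have h := eig_bound G hμ
    nlinarith [Real.sqrt_nonneg (8 * (Nat.card G.edgeSet : ℝ) + 1)]
  · linarith
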